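/- Under the strong incoherence assumptions A1 and A2 with parameter μ (i.e., |⟨e_a, P_U e_{a'}⟩ − (r/n)1_{a=a'}| ≤ μ√r/n, similarly for P_V, and |E_{ab}| ≤ μ√r/n), the coefficients c_{ab,a'b'} := ⟨e_a e_b*, 𝒬_T(e_{a'} e_{b'}*)⟩ of the operator 𝒬_T = 𝒫_T − ρ'𝒾 satisfy c_{ab,a'b'} = (1−ρ) 1_{b=b'} U_{a,a'} + (1−ρ) 1_{a=a'} V_{b,b'} − U_{a,a'} V_{b,b'}, and consequently |c_{ab,a'b'}| ≤ C [ (1_{a=a'} + 1_{b=b'}) μ√r/n + μ²r/n² ] for an absolute constant C. -/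

import Mathlib

open Matrix

set_option maxHeartbeats 1000000 in
/-- Under the strong incoherence assumptions A1, A2 with parameter
`μ`, the coefficients `c_{ab,a'b'} = ⟨e_a e_b*, 𝒬_T(e_{a'} e_{b'}*)⟩` of the
operator `𝒬_T = 𝒫_T − ρ'𝒾` satisfy
`c_{ab,a'b'} = (1−ρ) 1_{b=b'} U_{a,a'} + (1−ρ) 1_{a=a'} V_{b,b'} − U_{a,a'} V_{b,b'}`,
and consequently
`|c_{ab,a'b'}| ≤ C [(1_{a=a'} + 1_{b=b'}) μ√r/n + μ²r/n²]` for an absolute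
constant `C`. -/
theorem stmt18 (n r : ℕ) (μ : ℝ)
    (PU PV : Matrix (Fin n) (Fin n) ℝ)
    (hPUsymm : PUᵀ = PU) (hPUidem : PU * PU = PU) (hPUtr : PU.trace = r)
    (hPVsymm : PVᵀ = PV) (hPVidem : PV * PV = PV) (hPVtr : PV.trace = r)
    (E : Matrix (Fin n) (Fin n) ℝ)
    (hA1U : ∀ a a' : Fin n,
      |PU a a' - ((r : ℝ) / n) * (if a = a' then 1 else 0)| ≤ μ * Real.sqrt r / n)
    (hA1V : ∀ b b' : Fin n,
      |PV b b' - ((r : ℝ) / n) * (if b = b' then 1 else 0)| ≤ μ * Real.sqrt r / n)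
    (hA2 : ∀ a b : Fin n, |E a b| ≤ μ * Real.sqrt r / n)
    (ρ ρ' : ℝ) (hρ : ρ = (r : ℝ) / n) (hρ' : ρ' = 2 * ρ - ρ ^ 2)
    (QU QV : Matrix (Fin n) (Fin n) ℝ)
    (hQU : QU = PU - ρ • (1 : Matrix (Fin n) (Fin n) ℝ))
    (hQV : QV = PV - ρ • (1 : Matrix (Fin n) (Fin n) ℝ))
    (PT QT : Matrix (Fin n) (Fin n) ℝ → Matrix (Fin n) (Fin n) ℝ)
    (hPT : ∀ X, PT X = PU * X + X * PV - PU * X * PV)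
    (hQT : ∀ X, QT X = PT X - ρ' • X)
    (c : Fin n → Fin n → Fin n → Fin n → ℝ)
    (hc : ∀ a b a' b', c a b a' b' = QT (Matrix.single a' b' (1 : ℝ)) a b) :
    (∀ a b a' b' : Fin n,
      c a b a' b' =
        (1 - ρ) * (if b = b' then 1 else 0) * QU a a'
        + (1 - ρ) * (if a = a' then 1 else 0) * QV b b'
        - QU a a' * QV b b') ∧
    (∃ C : ℝ, 0 < C ∧ ∀ a b a' b' : Fin n,
      |c a b a' b'| ≤ C * (((if a = a' then (1 : ℝ) else 0) + (if b = b' then 1 else 0))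
          * (μ * Real.sqrt r / n) + μ ^ 2 * r / n ^ 2)) := by
  have hsymV : ∀ b b' : Fin n, PV b' b = PV b b' := fun b b' => congrFun (congrFun hPVsymm b) b'
  have key : ∀ a b a' b' : Fin n,
      c a b a' b' =
        (1 - ρ) * (if b = b' then 1 else 0) * QU a a'
        + (1 - ρ) * (if a = a' then 1 else 0) * QV b b'
        - QU a a' * QV b b' := by
    intro a b a' b'
    rw [hc, hQT, hPT, hQU, hQV]
    simp only [Matrix.sub_apply, Matrix.add_apply, Matrix.mul_apply, Matrix.smul_apply,
      Matrix.one_apply, Matrix.single, Matrix.of_apply, smul_eq_mul,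
      mul_ite, ite_mul, mul_one, mul_zero, one_mul, zero_mul, ite_and,
      Finset.sum_ite_irrel, Finset.sum_ite_eq, Finset.sum_ite_eq', Finset.mem_univ, if_true,
      Finset.sum_const_zero]
    rw [hsymV, hρ']
    rcases eq_or_ne a' a with rfl | ha
    · rcases eq_or_ne b' b with rfl | hb
      · simp <;> ring
      · simp [hb, Ne.symm hb] <;> ring
    · rcases eq_or_ne b' b with rfl | hb
      · simp [ha, Ne.symm ha] <;> ring
      · simp [ha, Ne.symm ha, hb, Ne.symm hb] <;> ring
  refine ⟨key, ?_⟩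
  rcases Nat.eq_zero_or_pos n with hn | hn
  · exact ⟨1, one_pos, fun a => absurd a.2 (by omega)⟩
  set t : ℝ := μ * Real.sqrt r / n with htdef
  have ht : 0 ≤ t := le_trans (abs_nonneg _) (hA2 ⟨0, hn⟩ ⟨0, hn⟩)
  have hs : Real.sqrt r ^ 2 = (r : ℝ) := Real.sq_sqrt (Nat.cast_nonneg r)
  have htt : t * t = μ ^ 2 * r / n ^ 2 := by
    calc t * t = μ ^ 2 * Real.sqrt r ^ 2 / n ^ 2 := by rw [htdef]; ring
    _ = μ ^ 2 * r / n ^ 2 := by rw [hs]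
  have hQUb : ∀ a a' : Fin n, |QU a a'| ≤ t := by
    intro a a'
    have := hA1U a a'
    rw [hQU]
    simp only [Matrix.sub_apply, Matrix.smul_apply, Matrix.one_apply, smul_eq_mul]
    rw [hρ]
    convert this using 3 <;> split_ifs <;> ring
  have hQVb : ∀ b b' : Fin n, |QV b b'| ≤ t := by
    intro b b'
    have := hA1V b b'
    rw [hQV]
    simp only [Matrix.sub_apply, Matrix.smul_apply, Matrix.one_apply, smul_eq_mul]
    rw [hρ]
    convert this using 3 <;> split_ifs <;> ring
  refine ⟨|1 - ρ| + 1, by positivity, fun a b a' b' => ?_⟩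
  rw [key, ← htt]
  have h1 := hQUb a a'
  have h2 := hQVb b b'
  have h1' := abs_nonneg (QU a a')
  have h2' := abs_nonneg (QV b b')
  have h3 := le_abs_self (QU a a')
  have h4 := neg_abs_le (QU a a')
  have h5 := le_abs_self (QV b b')
  have h6 := neg_abs_le (QV b b')
  have h7 := le_abs_self (1 - ρ)
  have h8 := neg_abs_le (1 - ρ)
  have h9 := abs_nonneg (1 - ρ)
  rw [abs_le]
  constructor <;> split_ifs <;>
    nlinarith [mul_nonneg h9 ht, mul_nonneg ht ht, mul_le_mul h1 h2 h2' ht,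
      mul_nonneg (mul_nonneg h9 ht) ht]
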